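/- Suppose (c_n)_{n≥1} is an oscillating sequence of complex numbers. Then for any integer q ≥ 2, any r ∈ {1,2,…,q}, and any t ∈ [0,1), (1/N)·Σ_{1≤n≤N, n≡r (mod q)} c_n e^{-2πitn} → 0 as N → ∞. -/

import Mathlib

open Filter Finset Topology
open scoped Classical

/-- A sequence of complex numbers is *oscillating* if its twisted Cesàro means tend to zero
for every frequency `t ∈ [0,1)`. -/
def Oscillating (c : ℕ → ℂ) : Prop :=
  ∀ t : ℝ, 0 ≤ t → t < 1 →
    Filter.Tendsto
      (fun N : ℕ => (N : ℂ)⁻¹ * ∑ n ∈ Finset.Icc 1 N,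
        c n * Complex.exp (-(2 * Real.pi * Complex.I * n * t)))
      Filter.atTop (nhds 0)

/-- The growth condition: `∑_{n=1}^N |c n|^λ = O(N)` for some `λ > 1`. -/
def GrowthCondition (c : ℕ → ℂ) : Prop :=
  ∃ lam : ℝ, 1 < lam ∧ ∃ C : ℝ, ∀ N : ℕ,
    ∑ n ∈ Finset.Icc 1 N, ‖c n‖ ^ lam ≤ C * N

/-- Upper density of a set of natural numbers. -/
noncomputable def upperDensity (E : Set ℕ) : ℝ :=
  Filter.limsup (fun N : ℕ => (((Finset.Icc 1 N).filter (fun n => n ∈ E)).card : ℝ) / N)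
    Filter.atTop

/-- A flow is mean-L-stable (MLS). -/
def IsMLS {X : Type*} [PseudoMetricSpace X] (T : X → X) : Prop :=
  ∀ ε : ℝ, 0 < ε → ∃ δ : ℝ, 0 < δ ∧ ∀ x y : X, dist x y < δ →
    upperDensity {n : ℕ | ε ≤ dist (T^[n] x) (T^[n] y)} < ε

/-- The restriction of a flow to a subset `K` is mean-L-stable. -/
def IsMLSOn {X : Type*} [PseudoMetricSpace X] (T : X → X) (K : Set X) : Prop :=
  ∀ ε : ℝ, 0 < ε → ∃ δ : ℝ, 0 < δ ∧ ∀ x ∈ K, ∀ y ∈ K, dist x y < δ →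
    upperDensity {n : ℕ | ε ≤ dist (T^[n] x) (T^[n] y)} < ε

/-- A minimal subset of a flow: nonempty, closed, invariant, and every forward orbit is dense. -/
def MinimalSubset {X : Type*} [TopologicalSpace X] (T : X → X) (K : Set X) : Prop :=
  K.Nonempty ∧ IsClosed K ∧ Set.MapsTo T K K ∧
    ∀ x ∈ K, K ⊆ closure (Set.range fun n : ℕ => T^[n] x)

/-- A flow is minimally mean-L-stable (MMLS) if its restriction to every minimal subset is MLS. -/
def IsMMLS {X : Type*} [PseudoMetricSpace X] (T : X → X) : Prop :=
  ∀ K : Set X, MinimalSubset T K → IsMLSOn T K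

/-- `x` is mean attracted to `K`. -/
def MeanAttracted {X : Type*} [PseudoMetricSpace X] (T : X → X) (x : X) (K : Set X) : Prop :=
  ∀ ε : ℝ, 0 < ε → ∃ z ∈ K,
    Filter.limsup
      (fun N : ℕ => (N : ℝ)⁻¹ * ∑ n ∈ Finset.Icc 1 N, dist (T^[n] x) (T^[n] z))
      Filter.atTop < ε

/-- A flow is minimally mean attractable (MMA). -/
def IsMMA {X : Type*} [PseudoMetricSpace X] (T : X → X) : Prop :=
  ∀ x : X, ∃ K : Set X, MinimalSubset T K ∧ MeanAttracted T x K

/-- A sequence is linearly disjoint from a flow. -/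
def LinearlyDisjoint {X : Type*} [TopologicalSpace X] (c : ℕ → ℂ) (T : X → X) : Prop :=
  ∀ f : C(X, ℂ), ∀ x : X,
    Filter.Tendsto
      (fun N : ℕ => (N : ℂ)⁻¹ * ∑ n ∈ Finset.Icc 1 N, c n * f (T^[n] x))
      Filter.atTop (nhds 0)

/-- An equicontinuous flow. -/
def EquicontinuousFlow {X : Type*} [PseudoMetricSpace X] (T : X → X) : Prop :=
  ∀ ε : ℝ, 0 < ε → ∃ δ : ℝ, 0 < δ ∧ ∀ x y : X, dist x y < δ →
    ∀ n : ℕ, dist (T^[n] x) (T^[n] y) < ε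

lemma geom_sum_exp (q : ℕ) (hq : 1 ≤ q) (k : ℤ) :
    ∑ j ∈ Finset.range q, Complex.exp (2 * Real.pi * Complex.I * j * k / q) =
      if (q:ℤ) ∣ k then (q:ℂ) else 0 := by
  have hq0 : (q:ℂ) ≠ 0 := Nat.cast_ne_zero.mpr (by omega)
  have htwo : (2 : ℂ) * Real.pi * Complex.I ≠ 0 := by
    simp [Real.pi_ne_zero, Complex.I_ne_zero]
  set ζ : ℂ := Complex.exp (2 * Real.pi * Complex.I * k / q) with hζ
  have hpow : ∀ j : ℕ, Complex.exp (2 * Real.pi * Complex.I * j * k / q) = ζ ^ j := by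
    intro j
    rw [hζ, ← Complex.exp_nat_mul]
    ring_nf
  rw [Finset.sum_congr rfl fun j _ => hpow j]
  by_cases hdvd : (q:ℤ) ∣ k
  · obtain ⟨m, rfl⟩ := hdvd
    have hζ1 : ζ = 1 := by
      rw [hζ]
      have h1 : 2 * (Real.pi:ℂ) * Complex.I * ((q:ℤ) * m : ℤ) / q
          = (m : ℤ) * (2 * Real.pi * Complex.I) := by
        push_cast; field_simp
      rw [h1, Complex.exp_int_mul_two_pi_mul_I]
    rw [if_pos (dvd_mul_right (q:ℤ) m)]
    simp [hζ1]
  · have hζq : ζ ^ q = 1 := by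
      rw [hζ, ← Complex.exp_nat_mul]
      have h1 : (q:ℂ) * (2 * Real.pi * Complex.I * k / q) = (k:ℤ) * (2 * Real.pi * Complex.I) := by
        field_simp
      rw [h1, Complex.exp_int_mul_two_pi_mul_I]
    have hζ1 : ζ ≠ 1 := by
      intro h
      rw [hζ, Complex.exp_eq_one_iff] at h
      obtain ⟨m, hm⟩ := h
      apply hdvd
      refine ⟨m, ?_⟩
      have hc : (k : ℂ) = ((q : ℤ) * m : ℤ) := by
        field_simp at hm
        push_cast
        refine mul_left_cancel₀ htwo ?_
        linear_combination (2 * Real.pi * Complex.I) * hm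
      exact_mod_cast hc
    rw [geom_sum_eq hζ1, hζq]
    simp [hdvd]

lemma exp_term_eq (q r n j : ℕ) (hq : 1 ≤ q) (t : ℝ) :
    Complex.exp (-(2 * Real.pi * Complex.I * j * r / q)) *
      Complex.exp (-(2 * Real.pi * Complex.I * n * (Int.fract (t - j / q) : ℝ))) =
    Complex.exp (-(2 * Real.pi * Complex.I * n * t)) *
      Complex.exp (2 * Real.pi * Complex.I * j * (((n:ℤ) - (r:ℤ) : ℤ) : ℂ) / q) := by
  have hq0 : (q:ℂ) ≠ 0 := Nat.cast_ne_zero.mpr (by omega)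
  rw [← Complex.exp_add, ← Complex.exp_add, Complex.exp_eq_exp_iff_exists_int]
  refine ⟨n * ⌊t - j / q⌋, ?_⟩
  have hfract : ((Int.fract (t - j / q) : ℝ) : ℂ)
      = (t : ℂ) - (j : ℂ) / q - (⌊t - (j:ℝ) / q⌋ : ℤ) := by
    rw [Int.fract]
    push_cast
    ring
  rw [hfract]
  push_cast
  field_simp
  ring

/-- Arithmetic subsequences of an oscillating sequence are oscillating:
for any `q ≥ 2`, `r ∈ {1,…,q}` and `t ∈ [0,1)`, the Cesàro means of `c_n e^{-2πitn}`
restricted to `n ≡ r (mod q)` tend to zero. -/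
theorem oscillating_arithmetic_progression
    (c : ℕ → ℂ) (hosc : Oscillating c)
    (q : ℕ) (hq : 2 ≤ q) (r : ℕ) (hr1 : 1 ≤ r) (hrq : r ≤ q)
    (t : ℝ) (ht0 : 0 ≤ t) (ht1 : t < 1) :
    Filter.Tendsto
      (fun N : ℕ => (N : ℂ)⁻¹ *
        ∑ n ∈ (Finset.Icc 1 N).filter (fun n => n % q = r % q),
          c n * Complex.exp (-(2 * Real.pi * Complex.I * n * t)))
      Filter.atTop (nhds 0) := by
  have hq1 : 1 ≤ q := by omega
  have hq0 : (q:ℂ) ≠ 0 := Nat.cast_ne_zero.mpr (by omega)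
  set s : ℕ → ℝ := fun j => Int.fract (t - j / q) with hs
  set e : ℕ → ℂ := fun j => Complex.exp (-(2 * Real.pi * Complex.I * j * r / q)) with he
  have hterm : ∀ j ∈ Finset.range q,
      Tendsto (fun N : ℕ =>
        e j * ((N:ℂ)⁻¹ * ∑ n ∈ Finset.Icc 1 N,
            c n * Complex.exp (-(2 * Real.pi * Complex.I * n * (s j)))))
        atTop (nhds 0) := by
    intro j _
    simpa using (hosc (s j) (Int.fract_nonneg _) (Int.fract_lt_one _)).const_mul (e j)
  have hsum := (tendsto_finset_sum (Finset.range q) hterm).const_mul ((q:ℂ)⁻¹)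
  simp only [Finset.sum_const_zero, mul_zero] at hsum
  refine hsum.congr fun N => ?_
  have key : ∀ n : ℕ,
      ∑ j ∈ Finset.range q, e j * (c n * Complex.exp (-(2 * Real.pi * Complex.I * n * (s j))))
        = (if n % q = r % q then (q:ℂ) else 0)
            * (c n * Complex.exp (-(2 * Real.pi * Complex.I * n * t))) := by
    intro n
    have h1 : ∀ j ∈ Finset.range q,
        e j * (c n * Complex.exp (-(2 * Real.pi * Complex.I * n * (s j))))
          = (c n * Complex.exp (-(2 * Real.pi * Complex.I * n * t)))
              * Complex.exp (2 * Real.pi * Complex.I * j * (((n:ℤ) - (r:ℤ) : ℤ) : ℂ) / q) := by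
      intro j _
      have h := exp_term_eq q r n j hq1 t
      simp only [he, hs]
      linear_combination (c n) * h
    rw [Finset.sum_congr rfl h1, ← Finset.mul_sum, geom_sum_exp q hq1 ((n:ℤ) - (r:ℤ))]
    have hiff : ((q:ℤ) ∣ (n:ℤ) - (r:ℤ)) ↔ n % q = r % q := by
      rw [← Int.modEq_iff_dvd, Int.ModEq]
      omega
    rw [mul_comm]
    congr 1
    simp only [hiff]
  calc (q:ℂ)⁻¹ * ∑ j ∈ Finset.range q,
        e j * ((N:ℂ)⁻¹ * ∑ n ∈ Finset.Icc 1 N,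
          c n * Complex.exp (-(2 * Real.pi * Complex.I * n * (s j))))
      = (N:ℂ)⁻¹ * ((q:ℂ)⁻¹ * ∑ n ∈ Finset.Icc 1 N, ∑ j ∈ Finset.range q,
          e j * (c n * Complex.exp (-(2 * Real.pi * Complex.I * n * (s j))))) := by
        have h2 : ∀ j ∈ Finset.range q,
            e j * ((N:ℂ)⁻¹ * ∑ n ∈ Finset.Icc 1 N,
              c n * Complex.exp (-(2 * Real.pi * Complex.I * n * (s j))))
            = (N:ℂ)⁻¹ * ∑ n ∈ Finset.Icc 1 N,
              e j * (c n * Complex.exp (-(2 * Real.pi * Complex.I * n * (s j)))) := by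
          intro j _
          rw [mul_left_comm, Finset.mul_sum]
        rw [Finset.sum_congr rfl h2, ← Finset.mul_sum, mul_left_comm, Finset.sum_comm]
    _ = (N:ℂ)⁻¹ * ∑ n ∈ Finset.Icc 1 N,
          (if n % q = r % q then c n * Complex.exp (-(2 * Real.pi * Complex.I * n * t)) else 0) := by
        congr 1
        rw [Finset.sum_congr rfl fun n _ => key n, Finset.mul_sum]
        refine Finset.sum_congr rfl fun n _ => ?_
        split_ifs with h
        · field_simp
        · simp
    _ = (N:ℂ)⁻¹ * ∑ n ∈ (Finset.Icc 1 N).filter (fun n => n % q = r % q),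
          c n * Complex.exp (-(2 * Real.pi * Complex.I * n * t)) := by
        rw [Finset.sum_filter]
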